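/- Let φ : X → ℝ ∪ {±∞} be radially pseudoconvex and radially l.s.c. at a ∈ dom φ with dom φ star-shaped at a. If φ↓(b, a - b) < 0 for some b, then for every t ≥ 1, setting b_t = a + t(b - a), one has φ↓(b_t, a - b_t) < 0; and if additionally φ(b) > -∞, then φ(b_t) > -∞ for all t ≥ 1. -/

import Mathlib

open Filter Set

/-- Inf-addition on the extended reals. -/
noncomputable def infAdd (r s : EReal) : EReal :=
  sInf {x : EReal | ∃ a b : ℝ, x = ((a + b : ℝ) : EReal) ∧ r ≤ (a : EReal) ∧ s ≤ (b : EReal)}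

/-- Inf-residuation on the extended reals. -/
noncomputable def eResid (r s : EReal) : EReal :=
  sInf {x : EReal | ∃ t : ℝ, x = (t : EReal) ∧ r ≤ infAdd s (t : EReal)}

/-- Lower Dini directional derivative of `ψ : ℝ → EReal`. -/
noncomputable def sDini (ψ : ℝ → EReal) (x u : ℝ) : EReal :=
  Filter.liminf (fun t : ℝ => ((1 / t : ℝ) : EReal) * eResid (ψ (x + t * u)) (ψ x))
    (nhdsWithin 0 (Set.Ioi 0))

/-- Lower Dini directional derivative of `φ : X → EReal`. -/
noncomputable def vDini {X : Type*} [AddCommGroup X] [Module ℝ X]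
    (φ : X → EReal) (x u : X) : EReal :=
  Filter.liminf (fun t : ℝ => ((1 / t : ℝ) : EReal) * eResid (φ (x + t • u)) (φ x))
    (nhdsWithin 0 (Set.Ioi 0))

/-- Radial restriction of `φ` to the segment `[a,b]`, extended by `+∞`. -/
noncomputable def radRestr {X : Type*} [AddCommGroup X] [Module ℝ X]
    (φ : X → EReal) (a b : X) : ℝ → EReal :=
  fun t : ℝ => if t ∈ Set.Icc (0 : ℝ) 1 then φ (a + t • (b - a)) else ⊤

/-- Pseudoconvexity (via the lower Dini derivative) of a function on `ℝ`. -/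
noncomputable def PCone (ψ : ℝ → EReal) : Prop :=
  ∀ u v : ℝ, ψ u < ψ v → sDini ψ v (u - v) < 0


lemma infAdd_coe_coe (s t : ℝ) : infAdd (s : EReal) (t : EReal) = ((s + t : ℝ) : EReal) := by
  apply le_antisymm
  · exact sInf_le ⟨s, t, rfl, le_refl _, le_refl _⟩
  · apply le_sInf
    rintro x ⟨p, q, rfl, hp, hq⟩
    exact_mod_cast add_le_add (EReal.coe_le_coe_iff.1 hp) (EReal.coe_le_coe_iff.1 hq)

lemma infAdd_top_coe (t : ℝ) : infAdd ⊤ (t : EReal) = ⊤ := by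
  have h : {x : EReal | ∃ a b : ℝ, x = ((a + b : ℝ) : EReal) ∧ (⊤:EReal) ≤ (a : EReal) ∧ (t:EReal) ≤ (b : EReal)} = ∅ := by
    ext x; simp only [mem_setOf_eq, mem_empty_iff_false, iff_false]
    rintro ⟨p, q, _, hp, _⟩
    exact (EReal.coe_lt_top p).not_ge hp
  rw [infAdd, h, sInf_empty]

lemma infAdd_bot_coe (t : ℝ) : infAdd ⊥ (t : EReal) = ⊥ := by
  rw [infAdd, sInf_eq_bot]
  intro b hb
  induction b with
  | bot => exact absurd hb (lt_irrefl _)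
  | coe y =>
      exact ⟨(((y - t - 1) + t : ℝ) : EReal), ⟨y - t - 1, t, rfl, bot_le, le_refl _⟩,
        by exact_mod_cast (by linarith : (y - t - 1) + t < y)⟩
  | top => exact ⟨(((0:ℝ) + t : ℝ) : EReal), ⟨0, t, rfl, bot_le, le_refl _⟩, EReal.coe_lt_top _⟩

lemma eResid_top (r : EReal) : eResid r ⊤ = ⊥ := by
  rw [eResid, sInf_eq_bot]
  intro b hb
  have hmem : ∀ t : ℝ, (t : EReal) ∈ {x : EReal | ∃ t' : ℝ, x = (t' : EReal) ∧ r ≤ infAdd ⊤ (t' : EReal)} := by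
    intro t; exact ⟨t, rfl, by rw [infAdd_top_coe]; exact le_top⟩
  induction b with
  | bot => exact absurd hb (lt_irrefl _)
  | coe y => exact ⟨((y - 1 : ℝ) : EReal), hmem _, by exact_mod_cast (by linarith : y - 1 < y)⟩
  | top => exact ⟨((0:ℝ) : EReal), hmem _, EReal.coe_lt_top _⟩

lemma eResid_coe (r : EReal) (s : ℝ) (hr : r ≠ ⊥) (hrt : r ≠ ⊤) :
    ∃ x : ℝ, r = (x : EReal) ∧ eResid r (s : EReal) = ((x - s : ℝ) : EReal) := by
  lift r to ℝ using ⟨hrt, hr⟩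
  refine ⟨r, rfl, ?_⟩
  rw [eResid]
  apply le_antisymm
  · exact sInf_le ⟨r - s, rfl, by rw [infAdd_coe_coe]; exact_mod_cast (by linarith : r ≤ s + (r - s))⟩
  · apply le_sInf
    rintro x ⟨t, rfl, ht⟩
    rw [infAdd_coe_coe] at ht
    exact_mod_cast (by have := EReal.coe_le_coe_iff.1 ht; linarith : r - s ≤ t)

lemma eResid_bot_eq_bot : eResid ⊥ ⊥ = ⊥ := by
  rw [eResid, sInf_eq_bot]
  intro b hb
  have hmem : ∀ t : ℝ, (t : EReal) ∈ {x : EReal | ∃ t' : ℝ, x = (t' : EReal) ∧ (⊥:EReal) ≤ infAdd ⊥ (t' : EReal)} := by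
    intro t; exact ⟨t, rfl, bot_le⟩
  induction b with
  | bot => exact absurd hb (lt_irrefl _)
  | coe y => exact ⟨((y - 1 : ℝ) : EReal), hmem _, by exact_mod_cast (by linarith : y - 1 < y)⟩
  | top => exact ⟨((0:ℝ) : EReal), hmem _, EReal.coe_lt_top _⟩

lemma eResid_bot_lt {r : EReal} (h : eResid r ⊥ < 0) : r = ⊥ := by
  by_contra hr
  have : {x : EReal | ∃ t : ℝ, x = (t : EReal) ∧ r ≤ infAdd ⊥ (t : EReal)} = ∅ := by
    ext x; simp only [mem_setOf_eq, mem_empty_iff_false, iff_false]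
    rintro ⟨t, _, ht⟩
    rw [infAdd_bot_coe] at ht
    exact hr (le_bot_iff.1 ht)
  rw [eResid, this, sInf_empty] at h
  exact (not_top_lt h).elim

lemma coe_mul_neg_iff {k : ℝ} (hk : 0 < k) {x : EReal} : (k : EReal) * x < 0 ↔ x < 0 := by
  induction x with
  | bot => simp [EReal.coe_mul_bot_of_pos hk]
  | coe y =>
      rw [← EReal.coe_mul, ← EReal.coe_zero, EReal.coe_lt_coe_iff, EReal.coe_lt_coe_iff]
      constructor
      · intro h; nlinarith
      · intro h; nlinarith
  | top => simp [EReal.coe_mul_top_of_pos hk]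

lemma coe_mul_le_coe {k x : ℝ} (hk : 0 < k) {r : EReal} (h : r ≤ (x : EReal)) :
    (k : EReal) * r ≤ ((k * x : ℝ) : EReal) := by
  induction r with
  | bot => rw [EReal.coe_mul_bot_of_pos hk]; exact bot_le
  | coe y =>
      rw [← EReal.coe_mul, EReal.coe_le_coe_iff]
      exact mul_le_mul_of_nonneg_left (EReal.coe_le_coe_iff.1 h) hk.le
  | top => exact absurd h (by simp)

lemma freq01 {P : ℝ → Prop} :
    (∃ᶠ s in nhdsWithin 0 (Set.Ioi 0), P s) ↔ ∀ ε > (0:ℝ), ∃ s, 0 < s ∧ s < ε ∧ P s := by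
  rw [(nhdsGT_basis (0:ℝ)).frequently_iff]
  constructor
  · intro h ε hε; obtain ⟨x, hx, hP⟩ := h ε hε; exact ⟨x, hx.1, hx.2, hP⟩
  · intro h ε hε; obtain ⟨x, h1, h2, hP⟩ := h ε hε; exact ⟨x, ⟨h1, h2⟩, hP⟩


lemma bot_lt_zero' : (⊥ : EReal) < 0 := by
  rw [← EReal.coe_zero]; exact EReal.bot_lt_coe 0

/-- value gap gives eResid < 0 (s real) -/
lemma eResid_neg_of_lt {r : EReal} {s : ℝ} (h : r < (s : EReal)) : eResid r (s : EReal) < 0 := by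
  rcases eq_or_ne r ⊥ with rfl | hrb
  · calc eResid ⊥ (s:EReal) ≤ ((s - 1 - s : ℝ) : EReal) := by
          rw [eResid]
          apply sInf_le
          exact ⟨s - 1 - s, rfl, bot_le⟩
      _ < 0 := by exact_mod_cast (show s - 1 - s < (0:ℝ) by linarith)
  · obtain ⟨x, rfl, hx⟩ := eResid_coe r s hrb h.ne_top
    rw [hx, ← EReal.coe_zero, EReal.coe_lt_coe_iff]
    have : x < s := by exact_mod_cast h
    linarith

/-- eResid < 0 gives value gap when denominator is a real -/
lemma lt_of_eResid_neg {r : EReal} {s : ℝ} (h : eResid r (s : EReal) < 0) : r < (s : EReal) := by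
  rcases eq_or_ne r ⊥ with rfl | hrb
  · exact EReal.bot_lt_coe s
  rcases eq_or_ne r ⊤ with rfl | hrt
  · exfalso
    have : eResid ⊤ (s : EReal) = ⊤ := by
      rw [eResid]
      have he : {x : EReal | ∃ t : ℝ, x = (t : EReal) ∧ (⊤:EReal) ≤ infAdd (s:EReal) (t : EReal)} = ∅ := by
        ext x; simp only [mem_setOf_eq, mem_empty_iff_false, iff_false]
        rintro ⟨t, _, ht⟩
        rw [infAdd_coe_coe] at ht
        exact (EReal.coe_lt_top _).not_ge ht
      rw [he, sInf_empty]
    rw [this] at h; exact not_top_lt h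
  · obtain ⟨x, rfl, hx⟩ := eResid_coe r s hrb hrt
    rw [hx, ← EReal.coe_zero, EReal.coe_lt_coe_iff] at h
    exact_mod_cast (show x < s by linarith)

lemma sdini_neg_of_eventually_bot {ψ : ℝ → EReal} {x d : ℝ}
    (h : ∀ᶠ s in nhdsWithin 0 (Set.Ioi 0), eResid (ψ (x + s * d)) (ψ x) = ⊥) :
    sDini ψ x d < 0 := by
  have hev : ∀ᶠ s in nhdsWithin 0 (Set.Ioi 0),
      ((1 / s : ℝ) : EReal) * eResid (ψ (x + s * d)) (ψ x) ≤ ⊥ := by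
    filter_upwards [h, eventually_mem_nhdsWithin] with s hs hmem
    rw [hs, EReal.coe_mul_bot_of_pos (one_div_pos.2 (mem_Ioi.1 hmem))]
  have := liminf_le_of_frequently_le hev.frequently
  exact lt_of_le_of_lt this bot_lt_zero'

lemma exists_resid_neg {ψ : ℝ → EReal} {x d : ℝ} (h : sDini ψ x d < 0) :
    ∀ ε > (0:ℝ), ∃ s, 0 < s ∧ s < ε ∧ eResid (ψ (x + s * d)) (ψ x) < 0 := by
  have hfreq : ∃ᶠ s in nhdsWithin 0 (Set.Ioi 0),
      ((1 / s : ℝ) : EReal) * eResid (ψ (x + s * d)) (ψ x) < 0 := by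
    by_contra hev
    rw [not_frequently] at hev
    have h0 : (0:EReal) ≤ sDini ψ x d :=
      le_liminf_of_le (by isBoundedDefault) (hev.mono fun s hs => not_lt.1 hs)
    exact absurd h (not_lt.2 h0)
  have := (hfreq.and_eventually eventually_mem_nhdsWithin)
  intro ε hε
  obtain ⟨s, h1, h2, h3⟩ := freq01.1 this ε hε
  exact ⟨s, h1, h2, (coe_mul_neg_iff (one_div_pos.2 h1)).1 h3.1⟩

lemma liminf_transfer {f g : ℝ → EReal} {l δ : ℝ} (hl : 0 < l) (hδ : 0 < δ)
    (heq : ∀ s : ℝ, 0 < s → s < δ → g s = (l : EReal) * f (l * s))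
    (h : Filter.liminf f (nhdsWithin 0 (Set.Ioi 0)) < 0) :
    Filter.liminf g (nhdsWithin 0 (Set.Ioi 0)) < 0 := by
  obtain ⟨c, hc1, hc2⟩ := EReal.exists_between_coe_real h
  have hc0 : c < 0 := by
    rw [← EReal.coe_zero, EReal.coe_lt_coe_iff] at hc2; exact hc2
  have hfreq : ∃ᶠ s in nhdsWithin 0 (Set.Ioi 0), f s ≤ (c : EReal) := by
    by_contra hev
    rw [not_frequently] at hev
    have h0 : (c:EReal) ≤ Filter.liminf f (nhdsWithin 0 (Set.Ioi 0)) :=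
      le_liminf_of_le (by isBoundedDefault) (hev.mono fun s hs => (not_le.1 hs).le)
    exact absurd hc1 (not_lt.2 h0)
  have key : ∀ ε > (0:ℝ), ∃ s, 0 < s ∧ s < ε ∧ g s ≤ ((l * c : ℝ) : EReal) := by
    intro ε hε
    obtain ⟨s', hs'0, hs'lt, hs'⟩ := freq01.1 hfreq (l * min ε δ) (by positivity)
    have hmin : s' / l < min ε δ := (div_lt_iff₀ hl).2 (by rw [mul_comm] at hs'lt; exact hs'lt)
    refine ⟨s' / l, by positivity, lt_of_lt_of_le hmin (min_le_left _ _), ?_⟩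
    rw [heq (s'/l) (by positivity) (lt_of_lt_of_le hmin (min_le_right _ _)),
      mul_div_cancel₀ _ hl.ne']
    exact coe_mul_le_coe hl hs'
  have hle : Filter.liminf g (nhdsWithin 0 (Set.Ioi 0)) ≤ ((l * c : ℝ) : EReal) :=
    liminf_le_of_frequently_le (freq01.2 key)
  refine lt_of_le_of_lt hle ?_
  rw [← EReal.coe_zero, EReal.coe_lt_coe_iff]
  exact mul_neg_of_pos_of_neg hl hc0

lemma sdini_scale {ψ : ℝ → EReal} {x d c : ℝ} (hc : 0 < c) (h : sDini ψ x d < 0) :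
    sDini ψ x (c * d) < 0 := by
  unfold sDini at h ⊢
  refine liminf_transfer hc one_pos (fun s hs _ => ?_) h
  have harg : x + s * (c * d) = x + (c * s) * d := by ring
  have hcoef : ((1 / s : ℝ) : EReal) = (c : EReal) * ((1 / (c * s) : ℝ) : EReal) := by
    rw [← EReal.coe_mul]
    congr 1
    field_simp
  rw [harg, hcoef, mul_assoc]

lemma lsc_min_Icc {ψ : ℝ → EReal} (hlsc : LowerSemicontinuous ψ) {k1 k2 : ℝ} (hk : k1 ≤ k2) :
    ∃ q ∈ Icc k1 k2, ∀ y ∈ Icc k1 k2, ψ q ≤ ψ y := by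
  set K := Icc k1 k2 with hK
  have hKne : K.Nonempty := nonempty_Icc.2 hk
  have hKcp : IsCompact K := isCompact_Icc
  set m := sInf (ψ '' K) with hm
  by_cases hatt : ∃ q ∈ K, ψ q = m
  · obtain ⟨q, hq, hqm⟩ := hatt
    exact ⟨q, hq, fun y hy => hqm ▸ sInf_le ⟨y, hy, rfl⟩⟩
  · exfalso
    have hmtop : m ≠ ⊤ := by
      intro hm'
      rcases hKne with ⟨x, hx⟩
      have hxt : ψ x = ⊤ := sInf_eq_top.1 hm' (ψ x) ⟨x, hx, rfl⟩
      exact hatt ⟨x, hx, by rw [hxt, hm']⟩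
    have hιne : Nonempty {c : EReal // m < c} := ⟨⟨⊤, lt_top_iff_ne_top.2 hmtop⟩⟩
    set Z : {c : EReal // m < c} → Set ℝ := fun c => K ∩ ψ ⁻¹' (Iic c.1) with hZ
    have hZne : ∀ c, (Z c).Nonempty := by
      intro c
      obtain ⟨v, ⟨x, hx, rfl⟩, hv⟩ := sInf_lt_iff.1 (c.2 : sInf (ψ '' K) < c.1)
      exact ⟨x, hx, le_of_lt hv⟩
    have hZcl : ∀ c, IsClosed (Z c) := fun c => isClosed_Icc.inter (hlsc.isClosed_preimage c.1)
    have hZcp : ∀ c, IsCompact (Z c) := fun c => hKcp.of_isClosed_subset (hZcl c) inter_subset_left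
    have hdir : Directed (· ⊇ ·) Z := by
      intro c d
      refine ⟨⟨min c.1 d.1, lt_min c.2 d.2⟩, ?_, ?_⟩
      · exact inter_subset_inter_right _ (preimage_mono (Iic_subset_Iic.2 (min_le_left _ _)))
      · exact inter_subset_inter_right _ (preimage_mono (Iic_subset_Iic.2 (min_le_right _ _)))
    obtain ⟨x, hx⟩ :=
      IsCompact.nonempty_iInter_of_directed_nonempty_isCompact_isClosed Z hdir hZne hZcp hZcl
    have hxK : x ∈ K := (mem_iInter.1 hx ⟨⊤, lt_top_iff_ne_top.2 hmtop⟩).1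
    have hle : ψ x ≤ m := by
      by_contra hgt
      obtain ⟨cmid, h1, h2⟩ := exists_between (not_le.1 hgt)
      exact absurd ((mem_iInter.1 hx ⟨cmid, h1⟩).2 : ψ x ≤ cmid) (not_le.2 h2)
    exact hatt ⟨x, hxK, le_antisymm hle (sInf_le ⟨x, hxK, rfl⟩)⟩

lemma qc_contra (ψ : ℝ → EReal) (hlsc : LowerSemicontinuous ψ) (hpc : PCone ψ)
    {p q r : ℝ} (hpq : p < q) (hqr : q < r)
    (hne : ∀ s ∈ Icc p r, ψ s ≠ ⊤)
    (h1 : ψ p < ψ q) (h2 : ψ r < ψ q) : False := by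
  obtain ⟨c, hc1, hc2⟩ := EReal.exists_between_coe_real (max_lt h1 h2 : max (ψ p) (ψ r) < ψ q)
  have hpc' : ψ p ≤ (c:EReal) := ((le_max_left _ _).trans_lt hc1).le
  have hrc : ψ r ≤ (c:EReal) := ((le_max_right _ _).trans_lt hc1).le
  set S1 := Icc p q ∩ ψ ⁻¹' (Iic (c:EReal)) with hS1
  have hS1cl : IsClosed S1 := isClosed_Icc.inter (hlsc.isClosed_preimage _)
  have hS1cp : IsCompact S1 := isCompact_Icc.of_isClosed_subset hS1cl inter_subset_left
  have hS1ne : S1.Nonempty := ⟨p, ⟨le_refl _, hpq.le⟩, hpc'⟩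
  set α := sSup S1 with hα
  have hαS : α ∈ S1 := hS1cp.sSup_mem hS1ne
  have hαq : α < q :=
    lt_of_le_of_ne hαS.1.2 (fun h => absurd (h ▸ hαS.2 : ψ q ≤ (c:EReal)) (not_le.2 hc2))
  have hpα : p ≤ α := hαS.1.1
  set S2 := Icc q r ∩ ψ ⁻¹' (Iic (c:EReal)) with hS2
  have hS2cl : IsClosed S2 := isClosed_Icc.inter (hlsc.isClosed_preimage _)
  have hS2cp : IsCompact S2 := isCompact_Icc.of_isClosed_subset hS2cl inter_subset_left
  have hS2ne : S2.Nonempty := ⟨r, ⟨hqr.le, le_refl _⟩, hrc⟩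
  set β := sInf S2 with hβ
  have hβS : β ∈ S2 := hS2cp.sInf_mem hS2ne
  have hqβ : q < β :=
    lt_of_le_of_ne hβS.1.1 (fun h => absurd (h ▸ hβS.2 : ψ q ≤ (c:EReal)) (not_le.2 hc2))
  have hβr : β ≤ r := hβS.1.2
  have hmid : ∀ x, α < x → x < β → (c:EReal) < ψ x := by
    intro x hx1 hx2
    by_contra hle
    rcases le_total x q with h | h
    · have hxS : x ∈ S1 := ⟨⟨hpα.trans hx1.le, h⟩, not_lt.1 hle⟩
      exact absurd (le_csSup hS1cp.bddAbove hxS) (not_le.2 hx1)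
    · have hxS : x ∈ S2 := ⟨⟨h, hx2.le.trans hβr⟩, not_lt.1 hle⟩
      exact absurd (csInf_le hS2cp.bddBelow hxS) (not_le.2 hx2)
  set k1 := (α + q)/2 with hk1
  set k2 := (q + β)/2 with hk2
  have hαk1 : α < k1 := by rw [hk1]; linarith
  have hk1q : k1 < q := by rw [hk1]; linarith
  have hqk2 : q < k2 := by rw [hk2]; linarith
  have hk2β : k2 < β := by rw [hk2]; linarith
  have hk12 : k1 ≤ k2 := by linarith
  obtain ⟨q0, hq0K, hq0min⟩ := lsc_min_Icc hlsc hk12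
  have hq0c : (c:EReal) < ψ q0 := hmid q0 (hαk1.trans_le hq0K.1) (hq0K.2.trans_lt hk2β)
  have hq0top : ψ q0 ≠ ⊤ :=
    hne q0 ⟨hpα.trans (hαk1.le.trans hq0K.1), hq0K.2.trans (hk2β.le.trans hβr)⟩
  have hq0bot : ψ q0 ≠ ⊥ := fun h => not_lt_bot (h ▸ hq0c)
  obtain ⟨v, hveq, -⟩ := eResid_coe (ψ q0) 0 hq0bot hq0top
  have hdα : sDini ψ q0 (α - q0) < 0 := hpc α q0 (lt_of_le_of_lt hαS.2 hq0c)
  have hdβ : sDini ψ q0 (β - q0) < 0 := hpc β q0 (lt_of_le_of_lt hβS.2 hq0c)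
  rcases lt_or_eq_of_le hq0K.2 with hlt | heq
  · -- q0 < k2 : move right, stay in K
    have hβq0 : 0 < β - q0 := by linarith
    obtain ⟨s, hs0, hsε, hres⟩ := exists_resid_neg hdβ ((k2 - q0)/(β - q0)) (div_pos (by linarith) hβq0)
    have hstep : s * (β - q0) < k2 - q0 := (lt_div_iff₀ hβq0).1 hsε
    have hyK : q0 + s * (β - q0) ∈ Icc k1 k2 :=
      ⟨hq0K.1.trans (by nlinarith), by linarith⟩
    rw [hveq] at hres
    have hlt' : ψ (q0 + s * (β - q0)) < ψ q0 := hveq ▸ lt_of_eResid_neg hres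
    exact absurd (hq0min _ hyK) (not_le.2 hlt')
  · -- q0 = k2 : move left, stay in K
    have hq0k1 : k1 < q0 := heq ▸ (hk1q.trans hqk2)
    have hq0α : 0 < q0 - α := by linarith
    obtain ⟨s, hs0, hsε, hres⟩ := exists_resid_neg hdα ((q0 - k1)/(q0 - α)) (div_pos (by linarith) hq0α)
    have hstep : s * (q0 - α) < q0 - k1 := (lt_div_iff₀ hq0α).1 hsε
    have hyK : q0 + s * (α - q0) ∈ Icc k1 k2 :=
      ⟨by nlinarith, (by nlinarith : q0 + s * (α - q0) ≤ q0).trans heq.le⟩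
    rw [hveq] at hres
    have hlt' : ψ (q0 + s * (α - q0)) < ψ q0 := hveq ▸ lt_of_eResid_neg hres
    exact absurd (hq0min _ hyK) (not_le.2 hlt')

lemma oneD (ψ : ℝ → EReal) (hlsc : LowerSemicontinuous ψ) (hpc : PCone ψ)
    {w : ℝ} (hw0 : 0 < w) (hw1 : w ≤ 1)
    (hdom : ψ 1 ≠ ⊤ → ∀ s ∈ Icc (0:ℝ) 1, ψ s ≠ ⊤)
    (Hw : sDini ψ w (-1) < 0) :
    sDini ψ 1 (-1) < 0 ∧ (ψ w ≠ ⊥ → ψ 1 ≠ ⊥) := by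
  by_cases htop : ψ 1 = ⊤
  · constructor
    · exact sdini_neg_of_eventually_bot
        (Filter.Eventually.of_forall (fun s => by rw [htop, eResid_top]))
    · intro _; rw [htop]; exact top_ne_bot
  have hdom' := hdom htop
  rcases eq_or_lt_of_le hw1 with hw1' | hwlt
  · subst hw1'
    exact ⟨Hw, fun h => h⟩
  have hwtop : ψ w ≠ ⊤ := hdom' w ⟨hw0.le, hw1⟩
  by_cases hbw : ψ w = ⊥
  · obtain ⟨s, hs0, hsw, hres⟩ := exists_resid_neg Hw w hw0
    have harg : w + s * (-1) = w - s := by ring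
    rw [harg, hbw] at hres
    have hu0 : ψ (w - s) = ⊥ := eResid_bot_lt hres
    set u0 := w - s with hu0def
    have hu00 : 0 < u0 := by simp only [hu0def]; linarith
    have hu0w : u0 < w := by simp only [hu0def]; linarith
    have hu01 : u0 < 1 := hu0w.trans hwlt
    by_cases hb1 : ψ 1 = ⊥
    · constructor
      · apply sdini_neg_of_eventually_bot
        have hIoo : Ioo (0:ℝ) (1 - u0) ∈ nhdsWithin 0 (Ioi 0) :=
          Ioo_mem_nhdsGT_of_mem ⟨le_refl 0, by linarith⟩
        filter_upwards [hIoo] with t ht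
        have hx : ψ (1 + t * (-1)) = ⊥ := by
          have h1t : 1 + t * (-1) = 1 - t := by ring
          rw [h1t]
          by_contra hne'
          have hgt : ⊥ < ψ (1 - t) := bot_lt_iff_ne_bot.2 hne'
          exact qc_contra ψ hlsc hpc (p := u0) (q := 1 - t) (r := 1)
            (by linarith [ht.2]) (by linarith [ht.1])
            (fun x hx => hdom' x ⟨le_trans hu00.le hx.1, hx.2⟩)
            (hu0 ▸ hgt) (hb1 ▸ hgt)
        rw [hx, hb1, eResid_bot_eq_bot]
      · intro h; exact absurd hbw h
    · refine ⟨?_, fun _ => hb1⟩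
      have hlt : ψ u0 < ψ 1 := hu0 ▸ bot_lt_iff_ne_bot.2 hb1
      have hd := hpc u0 1 hlt
      have hscale := sdini_scale (one_div_pos.2 (by linarith : (0:ℝ) < 1 - u0)) hd
      have heq1 : (1/(1-u0)) * (u0 - 1) = -1 := by
        have h1u : (1:ℝ) - u0 ≠ 0 := ne_of_gt (by linarith)
        field_simp
        ring
      rwa [heq1] at hscale
  · obtain ⟨s, hs0, hsw, hres⟩ := exists_resid_neg Hw w hw0
    have harg : w + s * (-1) = w - s := by ring
    obtain ⟨v, hveq, -⟩ := eResid_coe (ψ w) 0 hbw hwtop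
    rw [harg, hveq] at hres
    have hu0lt : ψ (w - s) < ψ w := hveq ▸ lt_of_eResid_neg hres
    set u0 := w - s with hu0def
    have hu00 : 0 < u0 := by simp only [hu0def]; linarith
    have hu01 : u0 < 1 := by simp only [hu0def]; linarith
    have hw1le : ψ w ≤ ψ 1 := by
      by_contra hgt
      exact qc_contra ψ hlsc hpc (p := u0) (q := w) (r := 1)
        (by simp only [hu0def]; linarith) hwlt
        (fun x hx => hdom' x ⟨le_trans hu00.le hx.1, hx.2⟩) hu0lt (not_le.1 hgt)
    refine ⟨?_, fun _ hb1 => hbw (le_bot_iff.1 (hb1 ▸ hw1le))⟩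
    have hd := hpc u0 1 (lt_of_lt_of_le hu0lt hw1le)
    have hscale := sdini_scale (one_div_pos.2 (by linarith : (0:ℝ) < 1 - u0)) hd
    have heq1 : (1/(1-u0)) * (u0 - 1) = -1 := by
      have h1u : (1:ℝ) - u0 ≠ 0 := ne_of_gt (by linarith)
      field_simp
      ring
    rwa [heq1] at hscale

/-- Let `φ` be radially pseudoconvex and radially l.s.c. at `a ∈ dom φ` with `dom φ`
star-shaped at `a`. If `φ↓(b, a-b) < 0`, then `φ↓(b_t, a-b_t) < 0` for all `t ≥ 1`,
where `b_t = a + t(b-a)`; if additionally `φ(b) > -∞`, then `φ(b_t) > -∞` for `t ≥ 1`. -/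
theorem dini_negative_along_ray
    {X : Type*} [AddCommGroup X] [Module ℝ X]
    (φ : X → EReal) (a : X) (ha : φ a ≠ ⊤)
    (hradlsc : ∀ b : X, LowerSemicontinuous (radRestr φ a b))
    (hradpc : ∀ b : X, PCone (radRestr φ a b))
    (hstar : ∀ x : X, φ x ≠ ⊤ → ∀ t ∈ Set.Icc (0 : ℝ) 1, φ (t • a + (1 - t) • x) ≠ ⊤)
    (b : X) (hb : vDini φ b (a - b) < 0) :
    ∀ t : ℝ, 1 ≤ t →
      vDini φ (a + t • (b - a)) (a - (a + t • (b - a))) < 0 ∧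
      (φ b ≠ ⊥ → φ (a + t • (b - a)) ≠ ⊥) := by
  intro t ht
  have ht0 : (0:ℝ) < t := lt_of_lt_of_le one_pos ht
  set bt := a + t • (b - a) with hbt
  have hbta : bt - a = t • (b - a) := by rw [hbt]; abel
  set ψ := radRestr φ a bt with hψ
  have hψval : ∀ s : ℝ, s ∈ Icc (0:ℝ) 1 → ψ s = φ (a + s • (t • (b - a))) := by
    intro s hs; rw [hψ, radRestr]; simp only [if_pos hs, hbta]
  have hψ1 : ψ 1 = φ bt := by
    rw [hψval 1 ⟨zero_le_one, le_refl 1⟩, one_smul, ← hbta]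
    congr 1; abel
  have hw0 : (0:ℝ) < 1/t := by positivity
  have hw1 : (1:ℝ)/t ≤ 1 := by rw [div_le_one ht0]; exact ht
  have hψw : ψ (1/t) = φ b := by
    rw [hψval _ ⟨hw0.le, hw1⟩, smul_smul]
    have hsc : (1/t) * t = 1 := by field_simp
    rw [hsc, one_smul]
    congr 1; abel
  have hlsc : LowerSemicontinuous ψ := by rw [hψ]; exact hradlsc bt
  have hpc : PCone ψ := by rw [hψ]; exact hradpc bt
  have hdom : ψ 1 ≠ ⊤ → ∀ s ∈ Icc (0:ℝ) 1, ψ s ≠ ⊤ := by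
    intro h1 s hs
    rw [hψval s hs]
    have hb' : φ bt ≠ ⊤ := by rw [← hψ1]; exact h1
    have hst := hstar bt hb' (1 - s) ⟨by linarith [hs.2], by linarith [hs.1]⟩
    have hveceq : (1 - s) • a + (1 - (1 - s)) • bt = a + s • (t • (b - a)) := by
      rw [hbt]; module
    rwa [hveceq] at hst
  have Hw : sDini ψ (1/t) (-1) < 0 := by
    unfold vDini at hb
    unfold sDini
    refine liminf_transfer ht0 hw0 (fun s hs0 hslt => ?_) hb
    have hmem : 1/t + s * (-1) ∈ Icc (0:ℝ) 1 := ⟨by linarith, by linarith⟩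
    rw [hψval _ hmem, hψw]
    have hvec : a + (1/t + s * (-1)) • (t • (b - a)) = b + (t * s) • (a - b) := by
      rw [smul_smul]
      have hc : (1/t + s * (-1)) * t = 1 - t * s := by field_simp; ring
      rw [hc]; module
    rw [hvec]
    have hcoef : ((1/s : ℝ) : EReal) = (t : EReal) * ((1/(t*s) : ℝ) : EReal) := by
      rw [← EReal.coe_mul]; congr 1; field_simp
    rw [hcoef, mul_assoc]
  obtain ⟨HA, HB⟩ := oneD ψ hlsc hpc hw0 hw1 hdom Hw
  constructor
  · unfold vDini
    unfold sDini at HA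
    refine liminf_transfer one_pos one_pos (fun s hs0 hslt => ?_) HA
    simp only [one_mul, EReal.coe_one]
    have hmem : 1 + s * (-1) ∈ Icc (0:ℝ) 1 := ⟨by linarith, by linarith⟩
    rw [hψval _ hmem, hψ1]
    have hvec : bt + s • (a - bt) = a + (1 + s * (-1)) • (t • (b - a)) := by
      rw [hbt]; module
    rw [hvec]
  · intro hbb
    have hbt' := HB (by rw [hψw]; exact hbb)
    rwa [hψ1] at hbt'
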